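/- Let ℳ, 𝒴, 𝒮' be finite sets and let {g_{s'} : ℳ × 𝒴 → 𝒴}_{s'∈𝒮'} be a family of functions such that for every m ∈ ℳ and s' ∈ 𝒮', the map y ↦ g_{s'}(m,y) is a bijection of 𝒴. For each (m,y) ∈ ℳ×𝒴 let τ_{E|m,y} be a density matrix on ℂ^d. Define d(M,Y;E) := min over density matrices σ_E on ℂ^d of ‖ Σ_{m,y} (1/(|ℳ||𝒴|)) |m,y⟩⟨m,y| ⊗ τ_{E|m,y} − P_{ℳ×𝒴} ⊗ σ_E ‖₁, and define d(M;E S' C) := min over density matrices σ on the composite classical-quantum system E S' C of ‖ Σ_{m,y,s'} (1/(|ℳ||𝒴||𝒮'|)) |m⟩⟨m| ⊗ τ_{E|m,y} ⊗ |s'⟩⟨s'| ⊗ |g_{s'}(m,y)⟩⟨g_{s'}(m,y)| − P_ℳ ⊗ σ ‖₁, where P_ℳ and P_{ℳ×𝒴} denote uniform classical states. Then d(M;E S' C) ≤ d(M,Y;E). -/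

import Mathlib

open scoped Kronecker ComplexOrder
open Matrix

noncomputable section
set_option maxHeartbeats 1000000

/-- Real power of a Hermitian matrix via functional calculus (junk value `0` otherwise). -/
def Matrix.hpow {n : Type*} [Fintype n] [DecidableEq n] (A : Matrix n n ℂ) (r : ℝ) :
    Matrix n n ℂ :=
  if hA : A.IsHermitian then
    (hA.eigenvectorUnitary : Matrix n n ℂ) *
      Matrix.diagonal (fun i => ((hA.eigenvalues i ^ r : ℝ) : ℂ)) *
      (hA.eigenvectorUnitary : Matrix n n ℂ)ᴴ
  else 0

/-- Trace norm ‖A‖₁ = Tr √(AᴴA). -/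
def Matrix.traceNorm {n : Type*} [Fintype n] [DecidableEq n] (A : Matrix n n ℂ) : ℝ :=
  ((Aᴴ * A).hpow (1/2)).trace.re

/-- Density matrix predicate. -/
def IsDensity {n : Type*} [Fintype n] (ρ : Matrix n n ℂ) : Prop :=
  ρ.PosSemidef ∧ ρ.trace = 1

/-- Probability distribution on a finite type. -/
def IsProbDist {X : Type*} [Fintype X] (Q : X → ℝ) : Prop :=
  (∀ x, 0 ≤ Q x) ∧ ∑ x, Q x = 1

/-- Tr[(σ^{−t/(2(1+t))} ρ σ^{−t/(2(1+t))})^{1+t}]. -/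
def sandwichTr {n : Type*} [Fintype n] [DecidableEq n] (t : ℝ) (ρ σ : Matrix n n ℂ) : ℝ :=
  (((σ.hpow (-(t / (2 * (1 + t)))) * ρ * σ.hpow (-(t / (2 * (1 + t))))).hpow (1 + t)).trace).re

/-- Ĩ_{1+t}^{↓}(X;E|W×Q), infimum over positive definite density matrices. -/
def ItildeDown {X n : Type*} [Fintype X] [Fintype n] [DecidableEq n]
    (t : ℝ) (W : X → Matrix n n ℂ) (Q : X → ℝ) : ℝ :=
  ⨅ σ : {σ : Matrix n n ℂ // σ.PosDef ∧ σ.trace = 1},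
    (1 / t) * Real.logb 2 (∑ x, Q x * sandwichTr t (W x) σ.1)

/-- The uniform classical state on a finite type. -/
def uniformState (T : Type*) [Fintype T] [DecidableEq T] : Matrix T T ℂ :=
  (Fintype.card T : ℂ)⁻¹ • 1


/-- Square root of a positive semidefinite matrix (spectral definition). -/
def Matrix.PosSemidef.sqrt {n : Type*} [Fintype n] [DecidableEq n] {A : Matrix n n ℂ}
    (hA : A.PosSemidef) : Matrix n n ℂ :=
  (hA.1.eigenvectorUnitary : Matrix n n ℂ) *
    Matrix.diagonal (fun i => ((Real.sqrt (hA.1.eigenvalues i) : ℝ) : ℂ)) *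
    (hA.1.eigenvectorUnitary : Matrix n n ℂ)ᴴ

open scoped MatrixOrder in
lemma Matrix.PosSemidef.sqrt_eq_cfc {n : Type*} [Fintype n] [DecidableEq n] {A : Matrix n n ℂ}
    (hA : A.PosSemidef) : hA.sqrt = CFC.sqrt A := by
  rw [CFC.sqrt_eq_cfc, cfc_nnreal_eq_real _ A, hA.1.cfc_eq, IsHermitian.cfc,
    Matrix.PosSemidef.sqrt, Unitary.conjStarAlgAut_apply]
  congr 2
  funext i j
  simp [Matrix.diagonal_apply, max_eq_left (hA.eigenvalues_nonneg i)]

open scoped MatrixOrder in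
lemma Matrix.PosSemidef.posSemidef_sqrt {n : Type*} [Fintype n] [DecidableEq n]
    {A : Matrix n n ℂ} (hA : A.PosSemidef) : hA.sqrt.PosSemidef := by
  rw [hA.sqrt_eq_cfc]
  exact (CFC.sqrt_nonneg A).posSemidef

open scoped MatrixOrder in
lemma Matrix.PosSemidef.sqrt_mul_self {n : Type*} [Fintype n] [DecidableEq n]
    {A : Matrix n n ℂ} (hA : A.PosSemidef) : hA.sqrt * hA.sqrt = A := by
  rw [hA.sqrt_eq_cfc]
  exact CFC.sqrt_mul_sqrt_self A hA.nonneg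

lemma Matrix.PosSemidef.sq_sqrt {n : Type*} [Fintype n] [DecidableEq n]
    {A : Matrix n n ℂ} (hA : A.PosSemidef) : hA.sqrt ^ 2 = A := by
  rw [pow_two, hA.sqrt_mul_self]

open scoped MatrixOrder in
lemma Matrix.PosSemidef.eq_sqrt_of_sq_eq {n : Type*} [Fintype n] [DecidableEq n]
    {B : Matrix n n ℂ} (hB : B.PosSemidef) {A : Matrix n n ℂ} (hA : A.PosSemidef)
    (h : B ^ 2 = A) : B = hA.sqrt := by
  rw [hA.sqrt_eq_cfc, eq_comm, CFC.sqrt_eq_iff A B hA.nonneg hB.nonneg, ← pow_two, h]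

open scoped MatrixOrder in
lemma Matrix.posSemidef_iff_eq_transpose_mul_self {n : Type*} [Fintype n] [DecidableEq n]
    {A : Matrix n n ℂ} : A.PosSemidef ↔ ∃ B : Matrix n n ℂ, A = Bᴴ * B := by
  rw [← Matrix.nonneg_iff_posSemidef, CStarAlgebra.nonneg_iff_eq_star_mul_self]
  rfl


lemma hpow_half_of_posSemidef {n : Type*} [Fintype n] [DecidableEq n]
    {A : Matrix n n ℂ} (hA : A.PosSemidef) : A.hpow (1/2) = hA.sqrt := by
  rw [Matrix.hpow, dif_pos hA.1, Matrix.PosSemidef.sqrt]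
  congr 1
  congr 1
  funext i j
  simp [Matrix.diagonal_apply, Real.sqrt_eq_rpow, one_div]

lemma traceNorm_eq_sqrt {n : Type*} [Fintype n] [DecidableEq n] (A : Matrix n n ℂ) :
    A.traceNorm = ((posSemidef_conjTranspose_mul_self A).sqrt).trace.re := by
  rw [Matrix.traceNorm, hpow_half_of_posSemidef (posSemidef_conjTranspose_mul_self A)]

lemma trace_re_nonneg {n : Type*} [Fintype n] [DecidableEq n]
    {A : Matrix n n ℂ} (hA : A.PosSemidef) : 0 ≤ A.trace.re := by
  obtain ⟨B, rfl⟩ := posSemidef_iff_eq_transpose_mul_self.mp hA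
  rw [Matrix.trace]
  simp only [Matrix.diag, Matrix.mul_apply, Matrix.conjTranspose_apply]
  rw [Complex.re_sum]
  refine Finset.sum_nonneg fun i _ => ?_
  rw [Complex.re_sum]
  refine Finset.sum_nonneg fun j _ => ?_
  simp [Complex.mul_re, mul_self_nonneg]
  nlinarith [mul_self_nonneg (B j i).re, mul_self_nonneg (B j i).im]

lemma traceNorm_nonneg {n : Type*} [Fintype n] [DecidableEq n] (A : Matrix n n ℂ) :
    0 ≤ A.traceNorm := by
  rw [traceNorm_eq_sqrt]
  exact trace_re_nonneg (posSemidef_conjTranspose_mul_self A).posSemidef_sqrt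

lemma posSemidef_smul_real {n : Type*} [Fintype n] [DecidableEq n]
    {A : Matrix n n ℂ} (hA : A.PosSemidef) {r : ℝ} (hr : 0 ≤ r) :
    ((r : ℂ) • A).PosSemidef := by
  refine ⟨?_, fun x => ?_⟩
  · unfold Matrix.IsHermitian
    rw [Matrix.conjTranspose_smul, hA.1]
    congr 1
    simp
  · exact (hA.smul (by exact_mod_cast hr : (0 : ℂ) ≤ (r : ℂ))).2 x

lemma posSemidef_blockDiagonal {n k : Type*} [Fintype n] [DecidableEq n]
    [Fintype k] [DecidableEq k] {A : k → Matrix n n ℂ} (h : ∀ i, (A i).PosSemidef) :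
    (Matrix.blockDiagonal A).PosSemidef := by
  choose B hB using fun i => posSemidef_iff_eq_transpose_mul_self.mp (h i)
  refine posSemidef_iff_eq_transpose_mul_self.mpr ⟨Matrix.blockDiagonal B, ?_⟩
  rw [Matrix.blockDiagonal_conjTranspose, ← Matrix.blockDiagonal_mul]
  exact congrArg _ (funext hB)

lemma traceNorm_blockDiagonal {n k : Type*} [Fintype n] [DecidableEq n]
    [Fintype k] [DecidableEq k] (A : k → Matrix n n ℂ) :
    (Matrix.blockDiagonal A).traceNorm = ∑ i, (A i).traceNorm := by
  have h1 : (Matrix.blockDiagonal A)ᴴ * Matrix.blockDiagonal A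
      = Matrix.blockDiagonal (fun i => (A i)ᴴ * A i) := by
    rw [Matrix.blockDiagonal_conjTranspose, ← Matrix.blockDiagonal_mul]
  have hP : (Matrix.blockDiagonal fun i =>
      (posSemidef_conjTranspose_mul_self (A i)).sqrt).PosSemidef :=
    posSemidef_blockDiagonal fun i => (posSemidef_conjTranspose_mul_self (A i)).posSemidef_sqrt
  have hsq : (Matrix.blockDiagonal fun i => (posSemidef_conjTranspose_mul_self (A i)).sqrt) ^ 2
      = (Matrix.blockDiagonal A)ᴴ * Matrix.blockDiagonal A := by
    rw [h1, pow_two, ← Matrix.blockDiagonal_mul]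
    exact congrArg _ (funext fun i => (posSemidef_conjTranspose_mul_self (A i)).sqrt_mul_self)
  have := hP.eq_sqrt_of_sq_eq (posSemidef_conjTranspose_mul_self (Matrix.blockDiagonal A)) hsq
  rw [traceNorm_eq_sqrt, ← this, Matrix.trace_blockDiagonal, Complex.re_sum]
  exact Finset.sum_congr rfl fun i _ => by rw [traceNorm_eq_sqrt]

lemma trace_submatrix_equiv {n m : Type*} [Fintype n] [DecidableEq n] [Fintype m]
    (A : Matrix n n ℂ) (e : m ≃ n) : (A.submatrix e e).trace = A.trace := by
  rw [Matrix.trace, Matrix.trace]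
  exact Equiv.sum_comp e (fun i => A.diag i)

lemma traceNorm_submatrix {n m : Type*} [Fintype n] [DecidableEq n]
    [Fintype m] [DecidableEq m] (A : Matrix n n ℂ) (e : m ≃ n) :
    (A.submatrix e e).traceNorm = A.traceNorm := by
  have h1 : (A.submatrix e e)ᴴ * A.submatrix e e = (Aᴴ * A).submatrix e e := by
    rw [Matrix.conjTranspose_submatrix, Matrix.submatrix_mul_equiv]
  have hP : (((posSemidef_conjTranspose_mul_self A).sqrt).submatrix e e).PosSemidef :=
    (posSemidef_conjTranspose_mul_self A).posSemidef_sqrt.submatrix e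
  have hsq : (((posSemidef_conjTranspose_mul_self A).sqrt).submatrix e e) ^ 2
      = (A.submatrix e e)ᴴ * A.submatrix e e := by
    rw [h1, pow_two, Matrix.submatrix_mul_equiv, ← pow_two, Matrix.PosSemidef.sq_sqrt]
  have := hP.eq_sqrt_of_sq_eq (posSemidef_conjTranspose_mul_self (A.submatrix e e)) hsq
  rw [traceNorm_eq_sqrt, ← this, trace_submatrix_equiv _ e, traceNorm_eq_sqrt]

lemma traceNorm_smul_real {n : Type*} [Fintype n] [DecidableEq n]
    (A : Matrix n n ℂ) {r : ℝ} (hr : 0 ≤ r) :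
    ((r : ℂ) • A).traceNorm = r * A.traceNorm := by
  have h1 : ((r : ℂ) • A)ᴴ * ((r : ℂ) • A) = ((r^2 : ℝ) : ℂ) • (Aᴴ * A) := by
    rw [Matrix.conjTranspose_smul]
    push_cast
    rw [Matrix.smul_mul, Matrix.mul_smul, smul_smul]
    congr 1
    simp [pow_two, Complex.ext_iff]
  have hP : ((r : ℂ) • (posSemidef_conjTranspose_mul_self A).sqrt).PosSemidef :=
    posSemidef_smul_real (posSemidef_conjTranspose_mul_self A).posSemidef_sqrt hr
  have hsq : ((r : ℂ) • (posSemidef_conjTranspose_mul_self A).sqrt) ^ 2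
      = ((r : ℂ) • A)ᴴ * ((r : ℂ) • A) := by
    rw [h1, pow_two, Matrix.smul_mul, Matrix.mul_smul, smul_smul,
      Matrix.PosSemidef.sqrt_mul_self]
    push_cast
    rw [pow_two]
  have := hP.eq_sqrt_of_sq_eq (posSemidef_conjTranspose_mul_self ((r : ℂ) • A)) hsq
  rw [traceNorm_eq_sqrt, ← this, Matrix.trace_smul, traceNorm_eq_sqrt]
  simp

/-- Publishing the seed `S'` and the hash value `C = g_{S'}(M,Y)` of an
error-verification hash does not increase the information leakage about `M` beyond the
leakage of `(M,Y)`. -/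
theorem error_verification_leakage
    {M' Y' S' : Type*} [Fintype M'] [Fintype Y'] [Fintype S']
    [DecidableEq M'] [DecidableEq Y'] [DecidableEq S']
    {d : ℕ}
    (g : S' → M' × Y' → Y')
    (hg : ∀ (m : M') (s' : S'), Function.Bijective (fun y => g s' (m, y)))
    (τ : M' × Y' → Matrix (Fin d) (Fin d) ℂ) (hτ : ∀ my, IsDensity (τ my)) :
    (⨅ σ : {σ : Matrix (Fin d × S' × Y') (Fin d × S' × Y') ℂ // IsDensity σ},
      Matrix.traceNorm
        ((∑ m : M', ∑ y : Y', ∑ s' : S',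
            ((Fintype.card M' : ℂ) * (Fintype.card Y' : ℂ) * (Fintype.card S' : ℂ))⁻¹ •
              (Matrix.single m m (1 : ℂ) ⊗ₖ
                (τ (m, y) ⊗ₖ
                  (Matrix.single s' s' (1 : ℂ) ⊗ₖ
                    Matrix.single (g s' (m, y)) (g s' (m, y)) (1 : ℂ)))))
          - uniformState M' ⊗ₖ σ.1))
    ≤ ⨅ σ : {σ : Matrix (Fin d) (Fin d) ℂ // IsDensity σ},
        Matrix.traceNorm
          ((∑ my : M' × Y',
              ((Fintype.card M' : ℂ) * (Fintype.card Y' : ℂ))⁻¹ •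
                (Matrix.single my my (1 : ℂ) ⊗ₖ τ my))
            - uniformState (M' × Y') ⊗ₖ σ.1) := by
  classical
  by_cases hne : Nonempty (Fin d × S' × Y')
  case neg =>
    rw [not_nonempty_iff] at hne
    haveI : IsEmpty {σ : Matrix (Fin d × S' × Y') (Fin d × S' × Y') ℂ // IsDensity σ} := by
      constructor
      rintro ⟨σ₂, h2⟩
      have h0 : σ₂.trace = 0 := by
        rw [Matrix.trace]
        simp [Finset.univ_eq_empty]
      exact one_ne_zero (h2.2.symm.trans h0)
    rw [Real.iInf_of_isEmpty]
    exact Real.iInf_nonneg fun σ => traceNorm_nonneg _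
  case pos =>
    obtain ⟨⟨i0, s0, y0⟩⟩ := hne
    haveI hS' : Nonempty S' := ⟨s0⟩
    haveI hY' : Nonempty Y' := ⟨y0⟩
    have hcS : ((Fintype.card S' : ℕ) : ℝ) ≠ 0 := Nat.cast_ne_zero.mpr Fintype.card_ne_zero
    have hcY : ((Fintype.card Y' : ℕ) : ℝ) ≠ 0 := Nat.cast_ne_zero.mpr Fintype.card_ne_zero
    set pR : ℝ := ((Fintype.card M' * Fintype.card Y' * Fintype.card S' : ℕ) : ℝ)⁻¹ with hpRdef
    set NR : ℝ := ((Fintype.card M' * Fintype.card Y' : ℕ) : ℝ)⁻¹ with hNRdef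
    have hpR : 0 ≤ pR := inv_nonneg.mpr (Nat.cast_nonneg _)
    have hNR : 0 ≤ NR := inv_nonneg.mpr (Nat.cast_nonneg _)
    have hcspr : (Fintype.card S' : ℝ) * pR = NR := by
      rw [hpRdef, hNRdef]
      push_cast
      rw [mul_inv, mul_comm, mul_assoc, inv_mul_cancel₀ hcS, mul_one]
    haveI : Nonempty {σ : Matrix (Fin d) (Fin d) ℂ // IsDensity σ} := by
      refine ⟨⟨Matrix.diagonal (Pi.single i0 1), ⟨Matrix.PosSemidef.diagonal ?_, ?_⟩⟩⟩
      · intro i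
        by_cases h : i = i0 <;> simp [h, Pi.single_apply]
      · simp [Matrix.trace_diagonal, Finset.sum_pi_single']
    refine le_ciInf fun σp => ?_
    obtain ⟨σ, hσ⟩ := σp
    set gE : M' → S' → Y' ≃ Y' := fun m s => Equiv.ofBijective _ (hg m s) with hgE
    set kR : ℝ := ((Fintype.card S' * Fintype.card Y' : ℕ) : ℝ)⁻¹ with hkRdef
    set σ' : Matrix (Fin d × S' × Y') (Fin d × S' × Y') ℂ :=
      Matrix.blockDiagonal (fun _ : S' × Y' => (kR : ℂ) • σ) with hσ'def
    have hσ'dens : IsDensity σ' := by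
      constructor
      · exact posSemidef_blockDiagonal fun _ =>
          posSemidef_smul_real hσ.1 (inv_nonneg.mpr (Nat.cast_nonneg _))
      · rw [hσ'def, Matrix.trace_blockDiagonal]
        simp only [Matrix.trace_smul, hσ.2, smul_eq_mul, mul_one, Finset.sum_const,
          Finset.card_univ, Fintype.card_prod, nsmul_eq_mul]
        rw [hkRdef]
        push_cast
        rw [mul_inv_cancel₀ (mul_ne_zero
          (Nat.cast_ne_zero.mpr Fintype.card_ne_zero)
          (Nat.cast_ne_zero.mpr Fintype.card_ne_zero))]
    set eL : M' × (Fin d × S' × Y') ≃ Fin d × (M' × (S' × Y')) :=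
      ⟨fun x => (x.2.1, (x.1, x.2.2)), fun x => (x.2.1, (x.1, x.2.2)),
        fun _ => rfl, fun _ => rfl⟩ with heL
    have key : (∑ m : M', ∑ y : Y', ∑ s' : S',
          ((Fintype.card M' : ℂ) * (Fintype.card Y' : ℂ) * (Fintype.card S' : ℂ))⁻¹ •
            (Matrix.single m m (1 : ℂ) ⊗ₖ
              (τ (m, y) ⊗ₖ
                (Matrix.single s' s' (1 : ℂ) ⊗ₖ
                  Matrix.single (g s' (m, y)) (g s' (m, y)) (1 : ℂ)))))
        - uniformState M' ⊗ₖ σ'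
      = (Matrix.blockDiagonal fun q : M' × (S' × Y') =>
          ((pR : ℂ)) • (τ (q.1, (gE q.1 q.2.1).symm q.2.2) - σ)).submatrix eL eL := by
      ext ⟨m, i, s, c⟩ ⟨m', j, s'', c'⟩
      simp only [Matrix.sub_apply, Matrix.sum_apply, Matrix.smul_apply, Matrix.kroneckerMap_apply,
        Matrix.submatrix_apply, heL, Equiv.coe_fn_mk, Matrix.blockDiagonal_apply, uniformState,
        Matrix.one_apply, smul_eq_mul, Matrix.single, Matrix.of_apply, hσ'def, hpRdef,
        hkRdef]
      by_cases hm : m = m'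
      · subst hm
        by_cases hs : s = s''
        · subst hs
          by_cases hc : c = c'
          · subst hc
            simp only [and_self, if_true, Prod.mk.injEq]
            rw [Finset.sum_eq_single m (fun b _ hb => by simp [hb])
              (fun hb => absurd (Finset.mem_univ m) hb), Finset.sum_comm,
              Finset.sum_eq_single s (fun b _ hb => by simp [hb])
              (fun hb => absurd (Finset.mem_univ s) hb),
              Finset.sum_eq_single ((gE m s).symm c)
                (fun y _ hy => by
                  have hne2 : g s (m, y) ≠ c := fun h => hy (by
                    rw [← h]
                    exact ((gE m s).symm_apply_apply y).symm)
                  simp [hne2])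
                (fun hb => absurd (Finset.mem_univ _) hb)]
            have hyc : g s (m, (gE m s).symm c) = c := (gE m s).apply_symm_apply c
            simp only [hyc, and_self, if_true]
            push_cast
            ring
          · rw [Finset.sum_eq_zero]
            · simp [hc]
            · intro m₀ _
              rw [Finset.sum_eq_zero]
              intro y _
              rw [Finset.sum_eq_zero]
              intro s₀ _
              by_cases h1 : g s₀ (m₀, y) = c <;> by_cases h2 : g s₀ (m₀, y) = c' <;>
                simp_all
        · rw [Finset.sum_eq_zero]
          · simp [hs]
          · intro m₀ _
            rw [Finset.sum_eq_zero]
            intro y _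
            rw [Finset.sum_eq_zero]
            intro s₀ _
            by_cases h1 : s₀ = s <;> by_cases h2 : s₀ = s'' <;> simp_all
      · rw [Finset.sum_eq_zero]
        · simp [hm]
        · intro m₀ _
          by_cases h1 : m₀ = m <;> by_cases h2 : m₀ = m' <;> simp_all
    have keyR : (∑ my : M' × Y',
          ((Fintype.card M' : ℂ) * (Fintype.card Y' : ℂ))⁻¹ •
            (Matrix.single my my (1 : ℂ) ⊗ₖ τ my))
        - uniformState (M' × Y') ⊗ₖ σ
      = (Matrix.blockDiagonal fun my : M' × Y' => ((NR : ℂ)) • (τ my - σ)).submatrix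
          (Equiv.prodComm (M' × Y') (Fin d)) (Equiv.prodComm (M' × Y') (Fin d)) := by
      ext ⟨my, i⟩ ⟨my', j⟩
      simp only [Matrix.sub_apply, Matrix.sum_apply, Matrix.smul_apply, Matrix.kroneckerMap_apply,
        Matrix.submatrix_apply, Equiv.prodComm_apply, Prod.swap_prod_mk,
        Matrix.blockDiagonal_apply, uniformState, Matrix.one_apply, smul_eq_mul,
        Matrix.single, Matrix.of_apply, hNRdef]
      by_cases h : my = my'
      · subst h
        rw [Finset.sum_eq_single my]
        · simp [Fintype.card_prod]
          push_cast
          ring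
        · intro b _ hb
          simp [hb, Ne.symm hb]
        · simp
      · rw [Finset.sum_eq_zero]
        · simp [h, Ne.symm h]
        · intro b _
          by_cases hb : b = my <;> simp [hb, h]
    refine ciInf_le_of_le ⟨0, ?_⟩ ⟨σ', hσ'dens⟩ ?_
    · rintro x ⟨σ₂, rfl⟩
      exact traceNorm_nonneg _
    · apply le_of_eq
      rw [key, keyR, traceNorm_submatrix, traceNorm_submatrix, traceNorm_blockDiagonal,
        traceNorm_blockDiagonal]
      have hL : ∀ q : M' × (S' × Y'),
          (((pR : ℂ)) • (τ (q.1, (gE q.1 q.2.1).symm q.2.2) - σ)).traceNorm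
          = pR * (τ (q.1, (gE q.1 q.2.1).symm q.2.2) - σ).traceNorm :=
        fun q => traceNorm_smul_real _ hpR
      have hRn : ∀ my : M' × Y',
          (((NR : ℂ)) • (τ my - σ)).traceNorm = NR * (τ my - σ).traceNorm :=
        fun my => traceNorm_smul_real _ hNR
      calc (∑ q : M' × (S' × Y'),
              (((pR : ℂ)) • (τ (q.1, (gE q.1 q.2.1).symm q.2.2) - σ)).traceNorm)
          = ∑ m : M', ∑ s : S', ∑ c : Y',
              pR * (τ (m, (gE m s).symm c) - σ).traceNorm := by
            rw [Fintype.sum_prod_type]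
            exact Finset.sum_congr rfl fun m _ => by
              rw [Fintype.sum_prod_type]
              exact Finset.sum_congr rfl fun s _ =>
                Finset.sum_congr rfl fun c _ => hL (m, (s, c))
        _ = ∑ m : M', ∑ s : S', ∑ y : Y', pR * (τ (m, y) - σ).traceNorm := by
            refine Finset.sum_congr rfl fun m _ => Finset.sum_congr rfl fun s _ => ?_
            exact Equiv.sum_comp (gE m s).symm fun y => pR * (τ (m, y) - σ).traceNorm
        _ = ∑ m : M', ∑ y : Y', NR * (τ (m, y) - σ).traceNorm := by
            refine Finset.sum_congr rfl fun m _ => ?_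
            rw [Finset.sum_const, Finset.card_univ, nsmul_eq_mul, Finset.mul_sum]
            exact Finset.sum_congr rfl fun y _ => by rw [← mul_assoc, hcspr]
        _ = ∑ my : M' × Y', (((NR : ℂ)) • (τ my - σ)).traceNorm := by
            rw [Fintype.sum_prod_type]
            exact Finset.sum_congr rfl fun m _ => Finset.sum_congr rfl fun y _ =>
              (hRn (m, y)).symm


end
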